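/- In H = SL₂(F_q) with q odd, for every nontrivial unipotent element u ∈ H there exist three H-conjugates of u whose product equals −I (minus the identity matrix). -/

import Mathlib

open Matrix

section

variable {F : Type*} [Field F]

def slMk (A : {A : Matrix (Fin 2) (Fin 2) F // A.det = 1}) : Matrix.SpecialLinearGroup (Fin 2) F := A

@[simp]
lemma coe_slMk (A : {A : Matrix (Fin 2) (Fin 2) F // A.det = 1}) :
    ((slMk A : Matrix.SpecialLinearGroup (Fin 2) F) : Matrix (Fin 2) (Fin 2) F) = A.1 := rfl

/-- Key computation for the standard unipotent `!![1,t;0,1]`. -/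
lemma key_stmt9 (t : F) (ht : t ≠ 0) (h2 : (2:F) ≠ 0)
    (T : Matrix.SpecialLinearGroup (Fin 2) F)
    (hT : (T : Matrix (Fin 2) (Fin 2) F) = !![1, t; 0, 1]) :
    ∃ a b c : Matrix.SpecialLinearGroup (Fin 2) F,
      IsConj T a ∧ IsConj T b ∧ IsConj T c ∧
      ((a * b * c : Matrix.SpecialLinearGroup (Fin 2) F) : Matrix (Fin 2) (Fin 2) F) = -1 := by
  have h4 : (4:F) ≠ 0 := by
    intro h; apply h2; have : (4:F) = 2*2 := by norm_num
    rw [this] at h; rcases mul_eq_zero.mp h with h|h <;> exact h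
  refine ⟨T,
    (slMk ⟨!![(1:F), 0; -4/t, 1], by simp [Matrix.det_fin_two_of]⟩),
    (slMk ⟨!![(-1:F), t; -4/t, 3], by rw [Matrix.det_fin_two_of]; field_simp; ring⟩),
    isConj_iff.mpr ⟨1, by group⟩, ?_, ?_, ?_⟩
  · refine isConj_iff.mpr ⟨(slMk ⟨!![(0:F), -t/2; 2/t, 0], by rw [Matrix.det_fin_two_of]; field_simp; ring⟩), ?_⟩
    refine mul_inv_eq_iff_eq_mul.mpr ?_
    ext i j
    simp only [Matrix.SpecialLinearGroup.coe_mul, hT]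
    fin_cases i <;> fin_cases j <;>
      simp [Matrix.mul_apply, Fin.sum_univ_two] <;> field_simp <;> ring
  · refine isConj_iff.mpr ⟨(slMk ⟨!![(1:F), 0; 2/t, 1], by simp [Matrix.det_fin_two_of]⟩), ?_⟩
    refine mul_inv_eq_iff_eq_mul.mpr ?_
    ext i j
    simp only [Matrix.SpecialLinearGroup.coe_mul, hT]
    fin_cases i <;> fin_cases j <;>
      simp [Matrix.mul_apply, Fin.sum_univ_two] <;> field_simp <;> ring
  · simp only [Matrix.SpecialLinearGroup.coe_mul, hT]
    ext i j
    fin_cases i <;> fin_cases j <;>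
      simp [Matrix.mul_apply, Fin.sum_univ_two] <;> field_simp <;> ring

end

theorem stmt9 {F : Type*} [Field F] [Fintype F] (hq : Odd (Fintype.card F))
    (u : Matrix.SpecialLinearGroup (Fin 2) F)
    (hu : ((u : Matrix (Fin 2) (Fin 2) F) - 1) ^ 2 = 0) (hu1 : u ≠ 1) :
    ∃ a b c : Matrix.SpecialLinearGroup (Fin 2) F,
      IsConj u a ∧ IsConj u b ∧ IsConj u c ∧
      ((a * b * c : Matrix.SpecialLinearGroup (Fin 2) F) : Matrix (Fin 2) (Fin 2) F) = -1 := by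
  have h2 : (2:F) ≠ 0 := by
    apply Ring.two_ne_zero
    intro h
    have := FiniteField.even_card_of_char_two h
    have h1 := Nat.odd_iff.mp hq
    omega
  -- entries of u
  set A : Matrix (Fin 2) (Fin 2) F := (u : Matrix (Fin 2) (Fin 2) F) with hA
  have hdet : A.det = 1 := u.2
  have hN : ∀ i j, ((A - 1) * (A - 1)) i j = 0 := by
    intro i j; rw [← sq, hu]; rfl
  have e00 := hN 0 0
  have e11 := hN 1 1
  have hd2 : A 0 0 * A 1 1 - A 0 1 * A 1 0 = 1 := by
    rwa [Matrix.det_fin_two] at hdet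
  simp [Matrix.mul_apply, Fin.sum_univ_two, Matrix.one_apply] at e00 e11
  have sq_zero : ∀ x : F, x * x = 0 → x = 0 := fun x h => by
    rcases mul_eq_zero.mp h with h|h <;> exact h
  by_cases hγ : A 1 0 = 0
  · -- upper triangular case
    have hα : A 0 0 = 1 := by
      have : A 0 0 - 1 = 0 := sq_zero _ (by linear_combination e00 - A 0 1 * hγ)
      linear_combination this
    have hδ : A 1 1 = 1 := by
      have : A 1 1 - 1 = 0 := sq_zero _ (by linear_combination e11 - A 0 1 * hγ)
      linear_combination this
    have hβ : A 0 1 ≠ 0 := by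
      intro hβ
      apply hu1
      ext i j
      fin_cases i <;> fin_cases j <;>
        simp [Matrix.one_apply] <;> first | exact hα | exact hγ | exact hδ | exact hβ
    exact key_stmt9 (A 0 1) hβ h2 u (by
      ext i j; fin_cases i <;> fin_cases j <;>
        simp <;> first | exact hα | exact hγ | exact hδ | rfl)
  · -- lower-left entry nonzero
    have e10 := hN 1 0
    simp [Matrix.mul_apply, Fin.sum_univ_two, Matrix.one_apply] at e10
    have htr : A 1 1 = 2 - A 0 0 := by
      have h : A 1 0 * (A 0 0 + A 1 1 - 2) = 0 := by linear_combination e10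
      rcases mul_eq_zero.mp h with h|h
      · exact absurd h hγ
      · linear_combination h
    set γ := A 1 0 with hγdef
    have hj : (!![(0:F), -1/γ; γ, 1 - A 0 0]).det = 1 := by
      simp [Matrix.det_fin_two_of]; field_simp
    have hTd : (!![(1:F), -1/γ; 0, 1]).det = 1 := by
      simp [Matrix.det_fin_two_of]
    set T : Matrix.SpecialLinearGroup (Fin 2) F := ⟨!![(1:F), -1/γ; 0, 1], hTd⟩ with hTdef
    have hconj : IsConj u T := by
      refine isConj_iff.mpr ⟨(slMk ⟨!![(0:F), -1/γ; γ, 1 - A 0 0], hj⟩), ?_⟩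
      refine mul_inv_eq_iff_eq_mul.mpr ?_
      ext i j
      simp only [Matrix.SpecialLinearGroup.coe_mul]
      fin_cases i <;> fin_cases j <;>
        simp [Matrix.mul_apply, Fin.sum_univ_two, ← hA, hTdef]
      all_goals try field_simp
      all_goals
        first
          | linear_combination htr
          | linear_combination (-1 - γ) * htr
          | linear_combination (A 1 1 - 1) * htr - e11
          | linear_combination e11 - (A 1 1 - 1) * htr
          | linear_combination (A 1 1 - 1 - γ) * htr - e11
          | linear_combination e11 + (1 - A 1 1) * htr
          | linear_combination γ * htr
          | linear_combination e00
          | linear_combination hd2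
          | linear_combination (-γ) * htr
          | linear_combination (-1 : F) * htr
          | exact Or.inl hγdef.symm
          | ring1
    obtain ⟨a, b, c, ha, hb, hc, habc⟩ :=
      key_stmt9 (-1/γ) (by simp [hγ]) h2 T (by rfl)
    exact ⟨a, b, c, hconj.trans ha, hconj.trans hb, hconj.trans hc, habc⟩
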